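/- Let B > 0, let ε ∈ {−1,+1}, and let ν > 0 satisfy cos ν ≠ 0 and e^{ν} = −(1 + ε·sin ν)/cos ν. Set r = B/ν. Then the null space of the 4×4 matrix M(r,B) is one-dimensional, spanned by the vector b = (b₁, b₂, b₃, b₄) with b₁ = (1/√B)·ε/(e^{ν}+ε), b₂ = (1/√B)·1/(1+ε·e^{−ν}), b₃ = −1/√B, b₄ = (1/√B)·(1−ε·e^{−ν})/(1+ε·e^{−ν}). In particular M(r,B)·b = 0 and every solution c of M(r,B)·c = 0 is a scalar multiple of b. -/

import Mathlib

open Real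

set_option maxHeartbeats 1000000 in
/-- If `ε ∈ {−1,+1}`, `ν > 0`, `cos ν ≠ 0` and
`e^ν = −(1 + ε sin ν)/cos ν`, then with `r = B/ν` the null space of `M(r,B)` is
one-dimensional, spanned by `b = (b₁,b₂,b₃,b₄)` with
`b₁ = ε/(√B (e^ν+ε))`, `b₂ = 1/(√B (1+ε e^{−ν}))`, `b₃ = −1/√B`,
`b₄ = (1−ε e^{−ν})/(√B (1+ε e^{−ν}))`. -/
theorem stmt_16 (B : ℝ) (hB : 0 < B) (ε : ℝ) (hε : ε = 1 ∨ ε = -1)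
    (ν : ℝ) (hν : 0 < ν) (hcos : cos ν ≠ 0)
    (hfix : exp ν = -(1 + ε * sin ν) / cos ν) (r : ℝ) (hr : r = B / ν) :
    letI M : Matrix (Fin 4) (Fin 4) ℝ :=
      !![r⁻¹ * exp (B / r), -r⁻¹ * exp (-(B / r)), r⁻¹ * sin (B / r), -r⁻¹ * cos (B / r);
         -r⁻¹ ^ 2 * exp (B / r), -r⁻¹ ^ 2 * exp (-(B / r)), r⁻¹ ^ 2 * cos (B / r),
           r⁻¹ ^ 2 * sin (B / r);
         r⁻¹ ^ 3, -r⁻¹ ^ 3, 0, r⁻¹ ^ 3;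
         r⁻¹ ^ 4, r⁻¹ ^ 4, r⁻¹ ^ 4, 0]
    letI b : Fin 4 → ℝ :=
      ![(1 / Real.sqrt B) * (ε / (exp ν + ε)),
        (1 / Real.sqrt B) * (1 / (1 + ε * exp (-ν))),
        -(1 / Real.sqrt B),
        (1 / Real.sqrt B) * ((1 - ε * exp (-ν)) / (1 + ε * exp (-ν)))]
    M.mulVec b = 0 ∧ b ≠ 0 ∧ ∀ c : Fin 4 → ℝ, M.mulVec c = 0 → ∃ t : ℝ, c = t • b := by
  have hν0 : ν ≠ 0 := ne_of_gt hν
  have hB0 : B ≠ 0 := ne_of_gt hB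
  have hBr : B / r = ν := by rw [hr]; field_simp
  have hr0 : r ≠ 0 := by rw [hr]; positivity
  have hri : r⁻¹ ≠ 0 := inv_ne_zero hr0
  have hsB : (0:ℝ) < Real.sqrt B := Real.sqrt_pos.mpr hB
  have hsB0 : Real.sqrt B ≠ 0 := ne_of_gt hsB
  have hε2 : ε ^ 2 = 1 := by rcases hε with h | h <;> rw [h] <;> norm_num
  have hp0 : exp ν ≠ 0 := Real.exp_ne_zero ν
  have hpi : exp ν * (exp ν)⁻¹ = 1 := mul_inv_cancel₀ hp0
  have hp1 : 1 < exp ν := Real.one_lt_exp_iff.mpr hν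
  have hq1 : (exp ν)⁻¹ < 1 := by
    rw [← Real.exp_neg]; exact Real.exp_lt_one_iff.mpr (by linarith)
  have hq0 : (0:ℝ) < (exp ν)⁻¹ := by positivity
  have hpyt : sin ν ^ 2 + cos ν ^ 2 = 1 := Real.sin_sq_add_cos_sq ν
  have hpc : exp ν * cos ν = -(1 + ε * sin ν) := by rw [hfix]; field_simp
  have hD : (0:ℝ) < exp ν + ε := by rcases hε with h | h <;> rw [h] <;> linarith
  have hD0 : exp ν + ε ≠ 0 := ne_of_gt hD
  have hE : (0:ℝ) < 1 + ε * (exp ν)⁻¹ := by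
    rcases hε with h | h <;> rw [h] <;> nlinarith
  have hE0 : 1 + ε * (exp ν)⁻¹ ≠ 0 := ne_of_gt hE
  have core : exp ν * (ε - sin ν) + cos ν * ε = 0 := by
    have hc2 : cos ν * (exp ν * (ε - sin ν) + cos ν * ε) = 0 := by
      linear_combination (ε - sin ν) * hpc - sin ν * hε2 + ε * hpyt
    exact (mul_eq_zero.mp hc2).resolve_left hcos
  simp only [hBr, Real.exp_neg]
  set M : Matrix (Fin 4) (Fin 4) ℝ :=
    !![r⁻¹ * exp ν, -r⁻¹ * (exp ν)⁻¹, r⁻¹ * sin ν, -r⁻¹ * cos ν;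
       -r⁻¹ ^ 2 * exp ν, -r⁻¹ ^ 2 * (exp ν)⁻¹, r⁻¹ ^ 2 * cos ν, r⁻¹ ^ 2 * sin ν;
       r⁻¹ ^ 3, -r⁻¹ ^ 3, 0, r⁻¹ ^ 3;
       r⁻¹ ^ 4, r⁻¹ ^ 4, r⁻¹ ^ 4, 0] with hM
  set b : Fin 4 → ℝ :=
    ![(1 / Real.sqrt B) * (ε / (exp ν + ε)),
      (1 / Real.sqrt B) * (1 / (1 + ε * (exp ν)⁻¹)),
      -(1 / Real.sqrt B),
      (1 / Real.sqrt B) * ((1 - ε * (exp ν)⁻¹) / (1 + ε * (exp ν)⁻¹))] with hbdef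
  have hb0 : b 0 = 1 / Real.sqrt B * (ε / (exp ν + ε)) := by rw [hbdef]; norm_num
  have hb1 : b 1 = 1 / Real.sqrt B * (1 / (1 + ε * (exp ν)⁻¹)) := by rw [hbdef]; norm_num
  have hb2 : b 2 = -(1 / Real.sqrt B) := by rw [hbdef]; rfl
  have hb3 : b 3 = 1 / Real.sqrt B
      * ((1 - ε * (exp ν)⁻¹) / (1 + ε * (exp ν)⁻¹)) := by rw [hbdef]; rfl
  -- b as scalar multiple of a polynomial vector
  have hk0 : b 0 = (1 / Real.sqrt B / (exp ν + ε)) * ε := by rw [hb0]; ring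
  have hk1 : b 1 = (1 / Real.sqrt B / (exp ν + ε)) * exp ν := by
    rw [hb1]; field_simp
  have hk2 : b 2 = (1 / Real.sqrt B / (exp ν + ε)) * (-(exp ν + ε)) := by
    rw [hb2]; field_simp
  have hk3 : b 3 = (1 / Real.sqrt B / (exp ν + ε)) * (exp ν - ε) := by
    rw [hb3]; field_simp
  -- extraction lemma
  have key : ∀ w : Fin 4 → ℝ, M.mulVec w = 0 →
      (exp ν * w 0 - (exp ν)⁻¹ * w 1 + sin ν * w 2 - cos ν * w 3 = 0 ∧
       w 0 - w 1 + w 3 = 0 ∧ w 0 + w 1 + w 2 = 0) := by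
    intro w hw
    rw [hM] at hw
    have h0 := congrFun hw 0
    have h2 := congrFun hw 2
    have h3 := congrFun hw 3
    simp [Matrix.mulVec, dotProduct, Fin.sum_univ_four] at h0 h2 h3
    refine ⟨?_, ?_, ?_⟩
    · have h : r⁻¹ * (exp ν * w 0 - (exp ν)⁻¹ * w 1 + sin ν * w 2 - cos ν * w 3)
          = r⁻¹ * 0 := by linear_combination h0
      exact mul_left_cancel₀ hri h
    · have h : r⁻¹ ^ 3 * (w 0 - w 1 + w 3) = r⁻¹ ^ 3 * 0 := by linear_combination h2
      exact mul_left_cancel₀ (pow_ne_zero 3 hri) h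
    · have h : r⁻¹ ^ 4 * (w 0 + w 1 + w 2) = r⁻¹ ^ 4 * 0 := by linear_combination h3
      exact mul_left_cancel₀ (pow_ne_zero 4 hri) h
  -- M.mulVec b = 0
  have hMb : M.mulVec b = 0 := by
    funext i
    rw [hM]
    fin_cases i <;>
      simp [Matrix.mulVec, dotProduct, Fin.sum_univ_four] <;>
      simp only [hk0, hk1, hk2, hk3]
    · linear_combination (r⁻¹ * (1 / Real.sqrt B / (exp ν + ε))) * core
        - (r⁻¹ * (1 / Real.sqrt B / (exp ν + ε))) * hpi
        - (r⁻¹ * (1 / Real.sqrt B / (exp ν + ε))) * hpc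
    · linear_combination (-(r⁻¹ ^ 2) * (1 / Real.sqrt B / (exp ν + ε))) * core
        - (r⁻¹ ^ 2 * (1 / Real.sqrt B / (exp ν + ε))) * hpi
        - (r⁻¹ ^ 2 * (1 / Real.sqrt B / (exp ν + ε))) * hpc
    · ring
    · ring
  have hb1pos : 0 < b 1 := by
    rw [hb1]
    exact mul_pos (by positivity) (one_div_pos.mpr hE)
  have hb1ne : b 1 ≠ 0 := ne_of_gt hb1pos
  obtain ⟨e1b, e3b, e4b⟩ := key b hMb
  have E1b : (exp ν - sin ν + cos ν) * b 0
      = ((exp ν)⁻¹ + sin ν + cos ν) * b 1 := by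
    linear_combination e1b - sin ν * e4b + cos ν * e3b
  have hK : exp ν - sin ν + cos ν ≠ 0 := by
    intro h
    have hL : (exp ν)⁻¹ + sin ν + cos ν = 0 := by
      have h2 : ((exp ν)⁻¹ + sin ν + cos ν) * b 1 = 0 := by rw [← E1b, h]; ring
      exact (mul_eq_zero.mp h2).resolve_right hb1ne
    have hcs : cos ν ^ 2 - sin ν ^ 2 = 1 := by
      have hKL : (exp ν - sin ν + cos ν) * ((exp ν)⁻¹ + sin ν + cos ν) = 0 := by
        rw [h]; ring
      linear_combination hpi - (sin ν - cos ν) * hL + (sin ν + cos ν) * h - hKL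
    have hs0 : sin ν = 0 := by nlinarith
    have : exp ν = -cos ν := by linarith [h, hs0]
    nlinarith [hp1, hpyt, hs0]
  refine ⟨hMb, ?_, ?_⟩
  · intro h
    have h2 := congrFun h 2
    rw [hb2] at h2
    simp at h2
    exact hsB0 h2
  · intro c hc
    obtain ⟨e1c, e3c, e4c⟩ := key c hc
    have E1c : (exp ν - sin ν + cos ν) * c 0
        = ((exp ν)⁻¹ + sin ν + cos ν) * c 1 := by
      linear_combination e1c - sin ν * e4c + cos ν * e3c
    refine ⟨c 1 / b 1, ?_⟩
    set t := c 1 / b 1 with ht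
    have hc1 : c 1 = t * b 1 := by rw [ht]; field_simp
    have hc0 : c 0 = t * b 0 := by
      have h : (exp ν - sin ν + cos ν) * (c 0 - t * b 0)
          = (exp ν - sin ν + cos ν) * 0 := by
        linear_combination E1c - t * E1b + ((exp ν)⁻¹ + sin ν + cos ν) * hc1
      have := mul_left_cancel₀ hK h
      linarith
    have hc2 : c 2 = t * b 2 := by linear_combination e4c - t * e4b - hc0 - hc1
    have hc3 : c 3 = t * b 3 := by linear_combination e3c - t * e3b - hc0 + hc1
    funext i
    fin_cases i <;> simp only [Pi.smul_apply, smul_eq_mul]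
    · exact hc0
    · exact hc1
    · exact hc2
    · exact hc3
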